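/- For any q-ary DMC W, bijective kernel g : 𝒳^ℓ → 𝒳^ℓ, index i ∈ {0,…,ℓ-1}, and x, x' ∈ 𝒳 with x ≠ x', the Bhattacharyya parameter of the i-th subchannel satisfies (1/q^{2ℓ-2-i}) · Z_min(W)^{D^{(i)}_{x,x'}} ≤ Z_{x,x'}(W^{(i)}) ≤ q^{ℓ-1-i} · Z_max(W)^{D^{(i)}_{x,x'}}. -/

import Mathlib

open MeasureTheory Filter Real
open scoped Classical

noncomputable section

namespace Polar

/-- `IsChannel W` : `W x y` is the probability of output `y` given input `x`,
each row is a probability distribution. -/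
def IsChannel {X Y : Type*} (W : X → Y → ℝ) : Prop :=
  (∀ x y, 0 ≤ W x y) ∧ ∀ x, HasSum (W x) 1

/-- Bhattacharyya parameter `Z_{x,x'}(W)` between inputs `x` and `x'`. -/
def Zb {X Y : Type*} (W : X → Y → ℝ) (x x' : X) : ℝ :=
  ∑' y, Real.sqrt (W x y * W x' y)

/-- `Z_max(W) = max_{x ≠ x'} Z_{x,x'}(W)`. -/
def Zmax {X Y : Type*} (W : X → Y → ℝ) : ℝ :=
  sSup {z | ∃ x x', x ≠ x' ∧ z = Zb W x x'}

/-- `Z_min(W) = min_{x,x'} Z_{x,x'}(W)`. -/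
def Zmin {X Y : Type*} (W : X → Y → ℝ) : ℝ :=
  sInf {z | ∃ x x', z = Zb W x x'}

/-- The subchannel `W^{(i)} : X → Y^ℓ × X^i` arising from the kernel `g`. -/
def subCh {X Y : Type*} [Fintype X] {ℓ : ℕ} (W : X → Y → ℝ)
    (g : (Fin ℓ → X) → Fin ℓ → X) (i : Fin ℓ) :
    X → ((Fin ℓ → Y) × (Fin i → X)) → ℝ :=
  fun ui p =>
    (1 / (Fintype.card X : ℝ) ^ (ℓ - 1)) *
      ∑ u : Fin ℓ → X,
        (if u i = ui ∧ (∀ j : Fin i, u ⟨j.1, j.2.trans i.2⟩ = p.2 j) then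
          ∏ j, W (g u j) (p.1 j) else 0)

/-- Partial distance `D^{(i)}_{x,x'}(u_0^{i-1})` of the kernel `g`. -/
def partialDist {X : Type*} {ℓ : ℕ} (g : (Fin ℓ → X) → Fin ℓ → X) (i : Fin ℓ)
    (up : Fin i → X) (x x' : X) : ℕ :=
  sInf {d | ∃ v w : Fin ℓ → X,
    (v i = x ∧ ∀ j : Fin i, v ⟨j.1, j.2.trans i.2⟩ = up j) ∧
    (w i = x' ∧ ∀ j : Fin i, w ⟨j.1, j.2.trans i.2⟩ = up j) ∧
    hammingDist (g v) (g w) = d}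

/-- `D^{(i)}_{x,x'} = min_{u_0^{i-1}} D^{(i)}_{x,x'}(u_0^{i-1})`. -/
def partialDist' {X : Type*} {ℓ : ℕ} (g : (Fin ℓ → X) → Fin ℓ → X) (i : Fin ℓ)
    (x x' : X) : ℕ :=
  sInf {d | ∃ up : Fin i → X, partialDist g i up x x' = d}

/-! ### Auxiliary material -/

lemma sqrt_mul_le_half {a b : ℝ} (ha : 0 ≤ a) (hb : 0 ≤ b) :
    Real.sqrt (a * b) ≤ (a + b) / 2 := by
  have h : a * b ≤ ((a + b) / 2) ^ 2 := by nlinarith [sq_nonneg (a - b)]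
  calc Real.sqrt (a * b) ≤ Real.sqrt (((a + b) / 2) ^ 2) := Real.sqrt_le_sqrt h
    _ = (a + b) / 2 := Real.sqrt_sq (by linarith)

lemma sqrt_prod {ι : Type*} (s : Finset ι) (f : ι → ℝ) (h : ∀ i ∈ s, 0 ≤ f i) :
    Real.sqrt (∏ i ∈ s, f i) = ∏ i ∈ s, Real.sqrt (f i) := by
  induction s using Finset.cons_induction with
  | empty => simp
  | cons a s ha ih =>
    rw [Finset.prod_cons, Finset.prod_cons,
      Real.sqrt_mul (h a (Finset.mem_cons_self a s)),
      ih (fun i hi => h i (Finset.mem_cons_of_mem hi))]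

lemma sqrt_add_le {a b : ℝ} (ha : 0 ≤ a) (hb : 0 ≤ b) :
    Real.sqrt (a + b) ≤ Real.sqrt a + Real.sqrt b := by
  have h : a + b ≤ (Real.sqrt a + Real.sqrt b) ^ 2 := by
    nlinarith [Real.sq_sqrt ha, Real.sq_sqrt hb, Real.sqrt_nonneg a, Real.sqrt_nonneg b]
  calc Real.sqrt (a + b) ≤ Real.sqrt ((Real.sqrt a + Real.sqrt b) ^ 2) := Real.sqrt_le_sqrt h
    _ = _ := Real.sqrt_sq (by positivity)

lemma sqrt_sum_le {ι : Type*} (s : Finset ι) (f : ι → ℝ) (h : ∀ i ∈ s, 0 ≤ f i) :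
    Real.sqrt (∑ i ∈ s, f i) ≤ ∑ i ∈ s, Real.sqrt (f i) := by
  induction s using Finset.cons_induction with
  | empty => simp
  | cons a s ha ih =>
    rw [Finset.sum_cons, Finset.sum_cons]
    have h2 : ∀ i ∈ s, 0 ≤ f i := fun i hi => h i (Finset.mem_cons_of_mem hi)
    calc Real.sqrt (f a + ∑ i ∈ s, f i)
        ≤ Real.sqrt (f a) + Real.sqrt (∑ i ∈ s, f i) :=
          sqrt_add_le (h a (Finset.mem_cons_self a s)) (Finset.sum_nonneg h2)
      _ ≤ Real.sqrt (f a) + ∑ i ∈ s, Real.sqrt (f i) := add_le_add le_rfl (ih h2)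

lemma hasSum_prodMk {α β : Type*} {f : α → ℝ} {g : β → ℝ} {A B : ℝ}
    (hf : HasSum f A) (hg : HasSum g B) :
    HasSum (fun p : α × β => f p.1 * g p.2) (A * B) :=
  hf.mul hg (summable_mul_of_summable_norm
    (by simpa [Real.norm_eq_abs] using (summable_abs_iff.2 hf.summable))
    (by simpa [Real.norm_eq_abs] using (summable_abs_iff.2 hg.summable)))

lemma hasSum_pi {Y : Type*} : ∀ {n : ℕ} (f : Fin n → Y → ℝ) (c : Fin n → ℝ),
    (∀ j, HasSum (f j) (c j)) →
    HasSum (fun y : Fin n → Y => ∏ j, f j (y j)) (∏ j, c j) := by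
  intro n
  induction n with
  | zero =>
      intro f c _
      have h : HasSum (fun _ : Fin 0 → Y => (1 : ℝ)) 1 :=
        hasSum_single (f := fun _ : Fin 0 → Y => (1 : ℝ)) default
          (fun b' hb' => absurd (Subsingleton.elim b' default) hb')
      simpa using h
  | succ n ih =>
      intro f c hf
      have h2 := ih (fun j => f j.succ) (fun j => c j.succ) (fun j => hf j.succ)
      have h1 := hasSum_prodMk (hf 0) h2
      rw [Fin.prod_univ_succ c]
      refine (Equiv.hasSum_iff (Fin.consEquiv (fun _ : Fin (n + 1) => Y))).1 ?_
      have he : ((fun y : Fin (n + 1) → Y => ∏ j, f j (y j)) ∘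
            (Fin.consEquiv (fun _ : Fin (n + 1) => Y)))
          = fun p : Y × (Fin n → Y) => f 0 p.1 * ∏ j : Fin n, f j.succ (p.2 j) := by
        funext p
        simp [Fin.consEquiv, Fin.prod_univ_succ]
      rw [he]
      exact h1

section Channel
variable {X Y : Type*} {W : X → Y → ℝ}

lemma summable_sqrtMul (hW : IsChannel W) (x x' : X) :
    Summable fun y => Real.sqrt (W x y * W x' y) :=
  Summable.of_nonneg_of_le (fun _ => Real.sqrt_nonneg _)
    (fun y => sqrt_mul_le_half (hW.1 x y) (hW.1 x' y))
    (((hW.2 x).add (hW.2 x')).div_const 2).summable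

lemma hasSum_Zb (hW : IsChannel W) (x x' : X) :
    HasSum (fun y => Real.sqrt (W x y * W x' y)) (Zb W x x') :=
  (summable_sqrtMul hW x x').hasSum

lemma Zb_nonneg (W : X → Y → ℝ) (x x' : X) : 0 ≤ Zb W x x' :=
  tsum_nonneg fun _ => Real.sqrt_nonneg _

lemma Zb_le_one (hW : IsChannel W) (x x' : X) : Zb W x x' ≤ 1 := by
  have h2 : HasSum (fun y => (W x y + W x' y) / 2) 1 := by
    have := ((hW.2 x).add (hW.2 x')).div_const 2
    norm_num at this
    exact this
  calc Zb W x x' ≤ ∑' y, (W x y + W x' y) / 2 :=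
        Summable.tsum_le_tsum (fun y => sqrt_mul_le_half (hW.1 x y) (hW.1 x' y))
          (summable_sqrtMul hW x x') h2.summable
    _ = 1 := h2.tsum_eq

lemma Zb_self (hW : IsChannel W) (a : X) : Zb W a a = 1 := by
  have h : (fun y => Real.sqrt (W a y * W a y)) = W a :=
    funext fun y => Real.sqrt_mul_self (hW.1 a y)
  rw [Zb, h]
  exact (hW.2 a).tsum_eq

lemma bddAbove_ZmaxSet (hW : IsChannel W) :
    BddAbove {z | ∃ x x', x ≠ x' ∧ z = Zb W x x'} := by
  refine ⟨1, ?_⟩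
  rintro z ⟨x, x', -, rfl⟩
  exact Zb_le_one hW x x'

lemma Zb_le_Zmax (hW : IsChannel W) {x x' : X} (h : x ≠ x') : Zb W x x' ≤ Zmax W :=
  le_csSup (bddAbove_ZmaxSet hW) ⟨x, x', h, rfl⟩

lemma Zmax_nonneg [Fintype X] (hq : 2 ≤ Fintype.card X) (hW : IsChannel W) :
    0 ≤ Zmax W := by
  obtain ⟨a, b, hab⟩ := Fintype.exists_pair_of_one_lt_card (α := X) (by omega)
  exact (Zb_nonneg W a b).trans (Zb_le_Zmax hW hab)

lemma Zmax_le_one [Fintype X] (hq : 2 ≤ Fintype.card X) (hW : IsChannel W) :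
    Zmax W ≤ 1 := by
  obtain ⟨a, b, hab⟩ := Fintype.exists_pair_of_one_lt_card (α := X) (by omega)
  refine csSup_le ⟨Zb W a b, a, b, hab, rfl⟩ ?_
  rintro z ⟨x, x', -, rfl⟩
  exact Zb_le_one hW x x'

lemma Zmin_le_Zb (W : X → Y → ℝ) (x x' : X) : Zmin W ≤ Zb W x x' :=
  csInf_le ⟨0, by rintro z ⟨a, b, rfl⟩; exact Zb_nonneg W a b⟩ ⟨x, x', rfl⟩

lemma Zmin_nonneg [Nonempty X] (W : X → Y → ℝ) : 0 ≤ Zmin W := by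
  obtain ⟨a⟩ := (inferInstance : Nonempty X)
  refine le_csInf ⟨Zb W a a, a, a, rfl⟩ ?_
  rintro z ⟨x, x', rfl⟩
  exact Zb_nonneg W x x'

lemma prod_Zb_le [Fintype X] {m : ℕ} (hq : 2 ≤ Fintype.card X) (hW : IsChannel W)
    (a b : Fin m → X) :
    ∏ j, Zb W (a j) (b j) ≤ Zmax W ^ hammingDist a b := by
  have hd : hammingDist a b = (Finset.univ.filter fun j => a j ≠ b j).card := by
    simp [hammingDist]
  rw [← Finset.prod_filter_mul_prod_filter_not Finset.univ (fun j => a j ≠ b j)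
    (fun j => Zb W (a j) (b j))]
  have h1 : (∏ j ∈ Finset.univ.filter fun j => ¬a j ≠ b j, Zb W (a j) (b j)) = 1 := by
    refine Finset.prod_eq_one fun j hj => ?_
    have : a j = b j := not_not.1 (Finset.mem_filter.1 hj).2
    rw [this]; exact Zb_self hW (b j)
  rw [h1, mul_one, hd]
  calc (∏ j ∈ Finset.univ.filter fun j => a j ≠ b j, Zb W (a j) (b j))
      ≤ ∏ _j ∈ Finset.univ.filter fun j => a j ≠ b j, Zmax W :=
        Finset.prod_le_prod (fun j _ => Zb_nonneg W _ _)
          (fun j hj => Zb_le_Zmax hW (Finset.mem_filter.1 hj).2)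
    _ = Zmax W ^ (Finset.univ.filter fun j => a j ≠ b j).card := Finset.prod_const _

lemma pow_Zmin_le_prod [Nonempty X] {m : ℕ} (hW : IsChannel W)
    (a b : Fin m → X) :
    Zmin W ^ hammingDist a b ≤ ∏ j, Zb W (a j) (b j) := by
  have hd : hammingDist a b = (Finset.univ.filter fun j => a j ≠ b j).card := by
    simp [hammingDist]
  rw [← Finset.prod_filter_mul_prod_filter_not Finset.univ (fun j => a j ≠ b j)
    (fun j => Zb W (a j) (b j))]
  have h1 : (∏ j ∈ Finset.univ.filter fun j => ¬a j ≠ b j, Zb W (a j) (b j)) = 1 := by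
    refine Finset.prod_eq_one fun j hj => ?_
    have : a j = b j := not_not.1 (Finset.mem_filter.1 hj).2
    rw [this]; exact Zb_self hW (b j)
  rw [h1, mul_one, hd]
  calc Zmin W ^ (Finset.univ.filter fun j => a j ≠ b j).card
      = ∏ _j ∈ Finset.univ.filter fun j => a j ≠ b j, Zmin W := (Finset.prod_const _).symm
    _ ≤ ∏ j ∈ Finset.univ.filter fun j => a j ≠ b j, Zb W (a j) (b j) :=
        Finset.prod_le_prod (fun j _ => Zmin_nonneg W) (fun j _ => Zmin_le_Zb W _ _)

end Channel

/-- The prefix of a word `u : Fin ℓ → X` before coordinate `i`. -/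
def pref {X : Type*} {ℓ : ℕ} (i : Fin ℓ) (u : Fin ℓ → X) : Fin i → X :=
  fun j => u ⟨j.1, j.2.trans i.2⟩

section Kernel

variable {X Y : Type*} [Fintype X] {W : X → Y → ℝ} {ℓ : ℕ}
  {g : (Fin ℓ → X) → Fin ℓ → X} {i : Fin ℓ}

lemma hasSum_sqrt_prodW (hW : IsChannel W) (g : (Fin ℓ → X) → Fin ℓ → X)
    (v w : Fin ℓ → X) :
    HasSum (fun y : Fin ℓ → Y =>
        Real.sqrt ((∏ j, W (g v j) (y j)) * (∏ j, W (g w j) (y j))))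
      (∏ j, Zb W (g v j) (g w j)) := by
  have h1 : (fun y : Fin ℓ → Y =>
      Real.sqrt ((∏ j, W (g v j) (y j)) * (∏ j, W (g w j) (y j))))
      = fun y => ∏ j, Real.sqrt (W (g v j) (y j) * W (g w j) (y j)) := by
    funext y
    rw [← Finset.prod_mul_distrib]
    exact sqrt_prod _ _ fun j _ => mul_nonneg (hW.1 _ _) (hW.1 _ _)
  rw [h1]
  exact hasSum_pi (fun j y => Real.sqrt (W (g v j) y * W (g w j) y))
    (fun j => Zb W (g v j) (g w j)) (fun j => hasSum_Zb hW _ _)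

/-- Per-pair term in the upper bound. -/
def hfun (W : X → Y → ℝ) (g : (Fin ℓ → X) → Fin ℓ → X) (i : Fin ℓ)
    (x x' : X) (v w : Fin ℓ → X) : ((Fin ℓ → Y) × (Fin i → X)) → ℝ :=
  fun p => if (v i = x ∧ pref i v = p.2) ∧ (w i = x' ∧ pref i w = p.2)
    then Real.sqrt ((∏ j, W (g v j) (p.1 j)) * (∏ j, W (g w j) (p.1 j))) else 0

/-- Sum of `hfun`. -/
def Tval (W : X → Y → ℝ) (g : (Fin ℓ → X) → Fin ℓ → X) (i : Fin ℓ)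
    (x x' : X) (v w : Fin ℓ → X) : ℝ :=
  if v i = x ∧ w i = x' ∧ pref i v = pref i w
    then ∏ j, Zb W (g v j) (g w j) else 0

lemma hasSum_indicator_one (c : Fin i → X) :
    HasSum (fun up : Fin i → X => if up = c then (1 : ℝ) else 0) 1 := by
  have h := hasSum_fintype (fun up : Fin i → X => if up = c then (1 : ℝ) else 0)
  simpa [Finset.sum_ite_eq'] using h

lemma hasSum_hfun (hW : IsChannel W) (x x' : X) (v w : Fin ℓ → X) :
    HasSum (hfun W g i x x' v w) (Tval W g i x x' v w) := by
  by_cases hc : v i = x ∧ w i = x' ∧ pref i v = pref i w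
  · obtain ⟨hv, hw, hpre⟩ := hc
    have h1 : hfun W g i x x' v w = fun p : (Fin ℓ → Y) × (Fin i → X) =>
        (fun y : Fin ℓ → Y =>
          Real.sqrt ((∏ j, W (g v j) (y j)) * (∏ j, W (g w j) (y j)))) p.1 *
        (fun up : Fin i → X => if up = pref i v then (1 : ℝ) else 0) p.2 := by
      funext p
      by_cases hp : p.2 = pref i v
      · simp only [hfun]
        rw [if_pos ⟨⟨hv, hp.symm⟩, hw, hpre.symm.trans hp.symm⟩, if_pos hp, mul_one]
      · simp only [hfun]
        rw [if_neg (fun hcon => hp hcon.1.2.symm), if_neg hp, mul_zero]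
    have h2 := hasSum_prodMk (hasSum_sqrt_prodW (Y := Y) hW g v w)
      (hasSum_indicator_one (pref i v))
    rw [h1]
    simpa [Tval, hv, hw, hpre] using h2
  · have h1 : hfun W g i x x' v w = fun _ => 0 := by
      funext p
      simp only [hfun]
      exact if_neg fun hcon => hc ⟨hcon.1.1, hcon.2.1, hcon.1.2.trans hcon.2.2.symm⟩
    rw [h1, Tval, if_neg hc]
    exact hasSum_zero

end Kernel


/-- bounds on the Bhattacharyya parameter of the subchannel
`W^{(i)}` in terms of the partial distance `D^{(i)}_{x,x'}`. -/
theorem bhattacharyya_subCh_bounds {X Y : Type*} [Fintype X] [Countable Y]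
    (hq : 2 ≤ Fintype.card X) (W : X → Y → ℝ) (hW : IsChannel W)
    {ℓ : ℕ} (g : (Fin ℓ → X) → Fin ℓ → X) (hg : Function.Bijective g)
    (i : Fin ℓ) (x x' : X) (hxx : x ≠ x') :
    (1 / (Fintype.card X : ℝ) ^ (2 * ℓ - 2 - i.1)) *
        Zmin W ^ partialDist' g i x x' ≤ Zb (subCh W g i) x x' ∧
      Zb (subCh W g i) x x' ≤
        (Fintype.card X : ℝ) ^ (ℓ - 1 - i.1) *
          Zmax W ^ partialDist' g i x x' := by
  classical
  haveI hXne : Nonempty X := Fintype.card_pos_iff.1 (by omega)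
  have hq0 : (0:ℝ) < (Fintype.card X : ℝ) := by
    exact_mod_cast (by omega : 0 < Fintype.card X)
  have hq1 : (1:ℝ) ≤ (Fintype.card X : ℝ) := by
    exact_mod_cast (by omega : 1 ≤ Fintype.card X)
  have hQpos : (0:ℝ) < (Fintype.card X : ℝ) ^ (ℓ - 1) := pow_pos hq0 _
  have hiℓ : i.1 < ℓ := i.isLt
  have hexp2 : ℓ - 1 ≤ 2 * ℓ - 2 - i.1 := by omega
  set D := partialDist' g i x x' with hDdef
  have hT : ∀ (u : Fin ℓ → X) (y : Fin ℓ → Y), 0 ≤ ∏ j, W (g u j) (y j) :=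
    fun u y => Finset.prod_nonneg fun j _ => hW.1 _ _
  set S : X → ((Fin ℓ → Y) × (Fin i → X)) → ℝ := fun a p =>
    ∑ u : Fin ℓ → X, (if u i = a ∧ pref i u = p.2 then ∏ j, W (g u j) (p.1 j) else 0)
    with hSdef
  have hSnonneg : ∀ a p, 0 ≤ S a p := by
    intro a p
    refine Finset.sum_nonneg fun u _ => ?_
    split
    · exact hT u p.1
    · exact le_rfl
  have hsub : ∀ (a : X) (p : (Fin ℓ → Y) × (Fin i → X)),
      subCh W g i a p = (1 / (Fintype.card X : ℝ) ^ (ℓ - 1)) * S a p := by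
    intro a p
    simp only [subCh, hSdef]
    congr 1
    refine Finset.sum_congr rfl fun u _ => ?_
    refine if_congr (and_congr_right fun _ => ?_) rfl rfl
    exact (funext_iff (f := pref i u) (g := p.2)).symm
  have hfe : ∀ p : (Fin ℓ → Y) × (Fin i → X),
      Real.sqrt (subCh W g i x p * subCh W g i x' p)
        = (1 / (Fintype.card X : ℝ) ^ (ℓ - 1)) * Real.sqrt (S x p * S x' p) := by
    intro p
    rw [hsub x p, hsub x' p]
    have h1 : (1 / (Fintype.card X : ℝ) ^ (ℓ - 1) * S x p) *
        (1 / (Fintype.card X : ℝ) ^ (ℓ - 1) * S x' p)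
        = (1 / (Fintype.card X : ℝ) ^ (ℓ - 1)) ^ 2 * (S x p * S x' p) := by ring
    rw [h1, Real.sqrt_mul (sq_nonneg _), Real.sqrt_sq (by positivity)]
  -- pointwise upper bound
  have hup : ∀ p : (Fin ℓ → Y) × (Fin i → X),
      Real.sqrt (subCh W g i x p * subCh W g i x' p)
        ≤ (1 / (Fintype.card X : ℝ) ^ (ℓ - 1)) *
            ∑ v : Fin ℓ → X, ∑ w : Fin ℓ → X, hfun W g i x x' v w p := by
    intro p
    rw [hfe p]
    refine mul_le_mul_of_nonneg_left ?_ (by positivity)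
    set tv : (Fin ℓ → X) → ℝ := fun v =>
      if v i = x ∧ pref i v = p.2 then ∏ j, W (g v j) (p.1 j) else 0 with htv
    set tw : (Fin ℓ → X) → ℝ := fun w =>
      if w i = x' ∧ pref i w = p.2 then ∏ j, W (g w j) (p.1 j) else 0 with htw
    have htvnn : ∀ v, 0 ≤ tv v := by
      intro v; rw [htv]; dsimp only; split
      · exact hT v p.1
      · exact le_rfl
    have htwnn : ∀ w, 0 ≤ tw w := by
      intro w; rw [htw]; dsimp only; split
      · exact hT w p.1
      · exact le_rfl
    have hnn : ∀ v w : Fin ℓ → X, 0 ≤ tv v * tw w :=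
      fun v w => mul_nonneg (htvnn v) (htwnn w)
    have hexp : S x p * S x' p = ∑ v : Fin ℓ → X, ∑ w : Fin ℓ → X, tv v * tw w := by
      rw [hSdef]
      exact Finset.sum_mul_sum _ _ _ _
    have h1 : Real.sqrt (S x p * S x' p)
        ≤ ∑ v : Fin ℓ → X, ∑ w : Fin ℓ → X, Real.sqrt (tv v * tw w) := by
      rw [hexp]
      refine le_trans (sqrt_sum_le _ _ fun v _ =>
        Finset.sum_nonneg fun w _ => hnn v w) ?_
      exact Finset.sum_le_sum fun v _ => sqrt_sum_le _ _ fun w _ => hnn v w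
    refine le_trans h1 (le_of_eq ?_)
    refine Finset.sum_congr rfl fun v _ => Finset.sum_congr rfl fun w _ => ?_
    rw [htv, htw]
    simp only [hfun]
    by_cases h1 : v i = x ∧ pref i v = p.2
    · by_cases h2 : w i = x' ∧ pref i w = p.2
      · rw [if_pos h1, if_pos h2, if_pos ⟨h1, h2⟩]
      · rw [if_neg h2, mul_zero, Real.sqrt_zero, if_neg fun hc => h2 hc.2]
    · rw [if_neg h1, zero_mul, Real.sqrt_zero, if_neg fun hc => h1 hc.1]
  have hFsum : HasSum (fun p : (Fin ℓ → Y) × (Fin i → X) =>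
      (1 / (Fintype.card X : ℝ) ^ (ℓ - 1)) *
        ∑ v : Fin ℓ → X, ∑ w : Fin ℓ → X, hfun W g i x x' v w p)
      ((1 / (Fintype.card X : ℝ) ^ (ℓ - 1)) *
        ∑ v : Fin ℓ → X, ∑ w : Fin ℓ → X, Tval W g i x x' v w) := by
    refine HasSum.mul_left _ ?_
    exact hasSum_sum fun v _ => hasSum_sum fun w _ => hasSum_hfun hW x x' v w
  have hfSummable : Summable
      (fun p : (Fin ℓ → Y) × (Fin i → X) =>
        Real.sqrt (subCh W g i x p * subCh W g i x' p)) :=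
    Summable.of_nonneg_of_le (fun _ => Real.sqrt_nonneg _) hup hFsum.summable
  have hZeq : Zb (subCh W g i) x x'
      = ∑' p : (Fin ℓ → Y) × (Fin i → X),
          Real.sqrt (subCh W g i x p * subCh W g i x' p) := rfl
  -- bound on Tval
  have hTle : ∀ v w : Fin ℓ → X, Tval W g i x x' v w ≤
      (if v i = x ∧ w i = x' ∧ pref i v = pref i w then Zmax W ^ D else 0) := by
    intro v w
    by_cases hc : v i = x ∧ w i = x' ∧ pref i v = pref i w
    · obtain ⟨hv, hw, hpre⟩ := hc
      simp only [Tval]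
      rw [if_pos ⟨hv, hw, hpre⟩, if_pos ⟨hv, hw, hpre⟩]
      have hle : D ≤ hammingDist (g v) (g w) := by
        have h1 : partialDist' g i x x' ≤ partialDist g i (pref i v) x x' :=
          Nat.sInf_le ⟨pref i v, rfl⟩
        have h2 : partialDist g i (pref i v) x x' ≤ hammingDist (g v) (g w) :=
          Nat.sInf_le ⟨v, w, ⟨hv, fun j => rfl⟩,
            ⟨hw, fun j => congrFun hpre.symm j⟩, rfl⟩
        rw [hDdef]; exact le_trans h1 h2
      exact le_trans (prod_Zb_le hq hW _ _)
        (pow_le_pow_of_le_one (Zmax_nonneg hq hW) (Zmax_le_one hq hW) hle)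
    · simp only [Tval]
      rw [if_neg hc, if_neg hc]
  -- counting
  set cnt := ((Finset.univ ×ˢ Finset.univ).filter
      (fun vw : (Fin ℓ → X) × (Fin ℓ → X) =>
        vw.1 i = x ∧ vw.2 i = x' ∧ pref i vw.1 = pref i vw.2)).card with hcnt
  have hsum2 : (∑ v : Fin ℓ → X, ∑ w : Fin ℓ → X,
      (if v i = x ∧ w i = x' ∧ pref i v = pref i w then Zmax W ^ D else 0))
      = (cnt : ℝ) * Zmax W ^ D := by
    rw [← Finset.sum_product' (s := Finset.univ) (t := Finset.univ)
      (f := fun v w : Fin ℓ → X =>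
        if v i = x ∧ w i = x' ∧ pref i v = pref i w then Zmax W ^ D else 0),
      ← Finset.sum_filter, Finset.sum_const, hcnt, nsmul_eq_mul]
  have hcn : cnt ≤ Fintype.card X ^ (ℓ - 1) * Fintype.card X ^ (ℓ - 1 - i.1) := by
    have hinj : cnt ≤ Fintype.card
        (({j : Fin ℓ // j ≠ i} → X) × ({j : Fin ℓ // i < j} → X)) := by
      rw [hcnt, ← Finset.card_univ]
      refine Finset.card_le_card_of_injOn
        (fun vw => (fun j => vw.1 j.1, fun j => vw.2 j.1))
        (fun _ _ => Finset.mem_univ _) ?_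
      intro a ha b hb hab
      have ha' := (Finset.mem_filter.1 ha).2
      have hb' := (Finset.mem_filter.1 hb).2
      have h1 := congrArg Prod.fst hab
      have h2 := congrArg Prod.snd hab
      have hfst : a.1 = b.1 := by
        funext j
        by_cases hj : j = i
        · rw [hj, ha'.1, hb'.1]
        · exact congrFun h1 ⟨j, hj⟩
      have hsnd : a.2 = b.2 := by
        funext j
        rcases lt_trichotomy j i with h | h | h
        · have hj' : j.1 < i.1 := h
          calc a.2 j = pref i a.2 ⟨j.1, hj'⟩ := rfl
            _ = pref i a.1 ⟨j.1, hj'⟩ := (congrFun ha'.2.2 ⟨j.1, hj'⟩).symm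
            _ = a.1 j := rfl
            _ = b.1 j := congrFun hfst j
            _ = pref i b.1 ⟨j.1, hj'⟩ := rfl
            _ = pref i b.2 ⟨j.1, hj'⟩ := congrFun hb'.2.2 ⟨j.1, hj'⟩
            _ = b.2 j := rfl
        · rw [h, ha'.2.1, hb'.2.1]
        · exact congrFun h2 ⟨j, h⟩
      exact Prod.ext hfst hsnd
    have hc1 : Fintype.card {j : Fin ℓ // j ≠ i} = ℓ - 1 := by
      simpa [Fintype.card_subtype_eq, Fintype.card_fin] using
        Fintype.card_subtype_compl (fun j : Fin ℓ => j = i)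
    have hc2 : Fintype.card {j : Fin ℓ // i < j} = ℓ - 1 - i.1 := by
      rw [Fintype.card_subtype]
      have he : Finset.univ.filter (fun j : Fin ℓ => i < j) = Finset.Ioi i := by
        ext j; simp
      rw [he, Fin.card_Ioi]
    calc cnt ≤ _ := hinj
      _ = _ := by
          rw [Fintype.card_prod, Fintype.card_fun, Fintype.card_fun, hc1, hc2]
  have hcard : (cnt : ℝ) ≤ (Fintype.card X : ℝ) ^ (ℓ - 1) *
      (Fintype.card X : ℝ) ^ (ℓ - 1 - i.1) := by
    calc (cnt:ℝ) ≤ ((Fintype.card X ^ (ℓ - 1) * Fintype.card X ^ (ℓ - 1 - i.1) : ℕ) : ℝ) := by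
          exact_mod_cast hcn
      _ = _ := by push_cast; ring
  have hZDnn : 0 ≤ Zmax W ^ D := pow_nonneg (Zmax_nonneg hq hW) D
  have hupper : Zb (subCh W g i) x x'
      ≤ (Fintype.card X : ℝ) ^ (ℓ - 1 - i.1) * Zmax W ^ D := by
    have hstep1 : Zb (subCh W g i) x x' ≤ (1 / (Fintype.card X : ℝ) ^ (ℓ - 1)) *
        ∑ v : Fin ℓ → X, ∑ w : Fin ℓ → X, Tval W g i x x' v w := by
      rw [hZeq, ← hFsum.tsum_eq]
      exact Summable.tsum_le_tsum hup hfSummable hFsum.summable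
    have hstep2 : ∑ v : Fin ℓ → X, ∑ w : Fin ℓ → X, Tval W g i x x' v w
        ≤ (cnt : ℝ) * Zmax W ^ D := by
      rw [← hsum2]
      exact Finset.sum_le_sum fun v _ => Finset.sum_le_sum fun w _ => hTle v w
    have hstep3 : (cnt : ℝ) * Zmax W ^ D ≤
        ((Fintype.card X : ℝ) ^ (ℓ - 1) * (Fintype.card X : ℝ) ^ (ℓ - 1 - i.1)) *
          Zmax W ^ D := mul_le_mul_of_nonneg_right hcard hZDnn
    have halg : (1 / (Fintype.card X : ℝ) ^ (ℓ - 1)) *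
        (((Fintype.card X : ℝ) ^ (ℓ - 1) * (Fintype.card X : ℝ) ^ (ℓ - 1 - i.1)) *
          Zmax W ^ D)
        = (Fintype.card X : ℝ) ^ (ℓ - 1 - i.1) * Zmax W ^ D := by
      field_simp
    calc Zb (subCh W g i) x x' ≤ _ := hstep1
      _ ≤ (1 / (Fintype.card X : ℝ) ^ (ℓ - 1)) * ((cnt : ℝ) * Zmax W ^ D) :=
          mul_le_mul_of_nonneg_left hstep2 (by positivity)
      _ ≤ (1 / (Fintype.card X : ℝ) ^ (ℓ - 1)) *
            (((Fintype.card X : ℝ) ^ (ℓ - 1) *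
              (Fintype.card X : ℝ) ^ (ℓ - 1 - i.1)) * Zmax W ^ D) :=
          mul_le_mul_of_nonneg_left hstep3 (by positivity)
      _ = _ := halg
  -- lower bound
  have hlower : (1 / (Fintype.card X : ℝ) ^ (2 * ℓ - 2 - i.1)) * Zmin W ^ D
      ≤ Zb (subCh W g i) x x' := by
    have hmem : ∃ up : Fin i → X, partialDist g i up x x' = D := by
      rw [hDdef]
      exact Nat.sInf_mem
        (⟨partialDist g i (fun _ => x) x x', ⟨fun _ => x, rfl⟩⟩ :
          {d | ∃ up : Fin i → X, partialDist g i up x x' = d}.Nonempty)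
    obtain ⟨up0, hup0⟩ := hmem
    have hne2 : {d | ∃ v w : Fin ℓ → X,
        (v i = x ∧ ∀ j : Fin i, v ⟨j.1, j.2.trans i.2⟩ = up0 j) ∧
        (w i = x' ∧ ∀ j : Fin i, w ⟨j.1, j.2.trans i.2⟩ = up0 j) ∧
        hammingDist (g v) (g w) = d}.Nonempty := by
      refine ⟨_, (fun j : Fin ℓ => if h : j.1 < i.1 then up0 ⟨j.1, h⟩ else x),
        (fun j : Fin ℓ => if h : j.1 < i.1 then up0 ⟨j.1, h⟩ else x'),
        ⟨?_, ?_⟩, ⟨?_, ?_⟩, rfl⟩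
      · exact dif_neg (lt_irrefl i.1)
      · intro j; exact dif_pos j.2
      · exact dif_neg (lt_irrefl i.1)
      · intro j; exact dif_pos j.2
    obtain ⟨v0, w0, ⟨hv1, hv2⟩, ⟨hw1, hw2⟩, hd0⟩ := Nat.sInf_mem hne2
    have hDeq : hammingDist (g v0) (g w0) = D := hd0.trans hup0
    have hprev : pref i v0 = up0 := funext fun j => hv2 j
    have hgl := (hasSum_prodMk (hasSum_sqrt_prodW (Y := Y) hW g v0 w0)
      (hasSum_indicator_one (i := i) up0)).mul_left
        (1 / (Fintype.card X : ℝ) ^ (ℓ - 1))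
    set gL : ((Fin ℓ → Y) × (Fin i → X)) → ℝ := fun p =>
      (1 / (Fintype.card X : ℝ) ^ (ℓ - 1)) *
        (Real.sqrt ((∏ j, W (g v0 j) (p.1 j)) * (∏ j, W (g w0 j) (p.1 j))) *
          (if p.2 = up0 then (1:ℝ) else 0)) with hgL
    have hgl' : HasSum gL ((1 / (Fintype.card X : ℝ) ^ (ℓ - 1)) *
        (∏ j, Zb W (g v0 j) (g w0 j))) := by
      simpa using hgl
    have hgle : ∀ p, gL p ≤ Real.sqrt (subCh W g i x p * subCh W g i x' p) := by
      intro p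
      rw [hfe p, hgL]
      dsimp only
      refine mul_le_mul_of_nonneg_left ?_ (by positivity)
      by_cases hp : p.2 = up0
      · rw [if_pos hp, mul_one]
        refine Real.sqrt_le_sqrt (mul_le_mul ?_ ?_ (hT w0 p.1) (hSnonneg x p))
        · have hs := Finset.single_le_sum (f := fun u : Fin ℓ → X =>
              if u i = x ∧ pref i u = p.2 then ∏ j, W (g u j) (p.1 j) else 0)
            (fun u _ => by split
                           · exact hT u p.1
                           · exact le_rfl) (Finset.mem_univ v0)
          rw [if_pos ⟨hv1, hprev.trans hp.symm⟩] at hs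
          exact hs
        · have hprew : pref i w0 = up0 := funext fun j => hw2 j
          have hs := Finset.single_le_sum (f := fun u : Fin ℓ → X =>
              if u i = x' ∧ pref i u = p.2 then ∏ j, W (g u j) (p.1 j) else 0)
            (fun u _ => by split
                           · exact hT u p.1
                           · exact le_rfl) (Finset.mem_univ w0)
          rw [if_pos ⟨hw1, hprew.trans hp.symm⟩] at hs
          exact hs
      · rw [if_neg hp, mul_zero]
        exact Real.sqrt_nonneg _
    have hpowle : (Fintype.card X : ℝ) ^ (ℓ - 1)
        ≤ (Fintype.card X : ℝ) ^ (2 * ℓ - 2 - i.1) :=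
      pow_le_pow_right₀ hq1 hexp2
    have hZminDnn : 0 ≤ Zmin W ^ D := pow_nonneg (Zmin_nonneg W) D
    calc (1 / (Fintype.card X : ℝ) ^ (2 * ℓ - 2 - i.1)) * Zmin W ^ D
        ≤ (1 / (Fintype.card X : ℝ) ^ (ℓ - 1)) * Zmin W ^ D :=
          mul_le_mul_of_nonneg_right (one_div_le_one_div_of_le hQpos hpowle) hZminDnn
      _ ≤ (1 / (Fintype.card X : ℝ) ^ (ℓ - 1)) *
            (∏ j, Zb W (g v0 j) (g w0 j)) := by
          refine mul_le_mul_of_nonneg_left ?_ (by positivity)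
          rw [← hDeq]
          exact pow_Zmin_le_prod hW _ _
      _ = ∑' p, gL p := hgl'.tsum_eq.symm
      _ ≤ ∑' p : (Fin ℓ → Y) × (Fin i → X),
            Real.sqrt (subCh W g i x p * subCh W g i x' p) :=
          Summable.tsum_le_tsum hgle hgl'.summable hfSummable
      _ = Zb (subCh W g i) x x' := rfl
  exact ⟨hlower, hupper⟩

end Polar
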